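/- Let G be a measurable space, ν a probability measure on G, M a standard Borel space, and T : G × M → M a jointly measurable map. Let μ be a Borel probability measure on M such that T(g, ·) preserves μ for ν-a.e. g ∈ G. Suppose there is f₀ ∈ G with {f₀} measurable, ν({f₀}) > 0, and T(f₀, ·) ergodic with respect to μ. If μ = μ₁ + μ₂ where μ₁ and μ₂ are mutually singular finite Borel measures each of which is ν-stationary, then μ₁ = 0 or μ₂ = 0. In particular, μ is ergodic as a ν-stationary measure. -/

import Mathlib

open MeasureTheory

/-- Let `ν` be a probability measure on a measurable space `G`, `M` a
standard Borel space, `T : G × M → M` jointly measurable, and `μ` a Borel probability measure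
on `M` preserved by `T(g, ·)` for `ν`-a.e. `g`.  Suppose some `f₀` with `ν {f₀} > 0` acts
ergodically on `(M, μ)`.  Then whenever `μ = μ₁ + μ₂` with `μ₁, μ₂` mutually singular finite
`ν`-stationary measures, `μ₁ = 0` or `μ₂ = 0`; in particular `μ` is ergodic as a
`ν`-stationary measure (every invariant set is null or conull). -/
theorem stationary_measure_indecomposable_of_ergodic_atom
    {G M : Type*} [MeasurableSpace G] [MeasurableSpace M] [StandardBorelSpace M]
    (ν : Measure G) [IsProbabilityMeasure ν]
    (T : G × M → M) (hT : Measurable T)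
    (μ : Measure M) [IsProbabilityMeasure μ]
    (hpres : ∀ᵐ g ∂ν, MeasurePreserving (fun x => T (g, x)) μ μ)
    (f₀ : G) (hf₀meas : MeasurableSet ({f₀} : Set G)) (hf₀ : 0 < ν {f₀})
    (herg : Ergodic (fun x => T (f₀, x)) μ) :
    (∀ μ₁ μ₂ : Measure M, IsFiniteMeasure μ₁ → IsFiniteMeasure μ₂ →
      (∀ A : Set M, MeasurableSet A → μ₁ A = ∫⁻ g, μ₁ {x | T (g, x) ∈ A} ∂ν) →
      (∀ A : Set M, MeasurableSet A → μ₂ A = ∫⁻ g, μ₂ {x | T (g, x) ∈ A} ∂ν) →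
      μ₁ ⟂ₘ μ₂ → μ = μ₁ + μ₂ → μ₁ = 0 ∨ μ₂ = 0) ∧
    (∀ A : Set M, MeasurableSet A →
      (∀ᵐ g ∂ν, ∀ᵐ x ∂μ, (x ∈ A → T (g, x) ∈ A) ∧ (x ∉ A → T (g, x) ∉ A)) →
      μ A = 0 ∨ μ Aᶜ = 0) := by
  have part2 : ∀ A : Set M, MeasurableSet A →
      (∀ᵐ g ∂ν, ∀ᵐ x ∂μ, (x ∈ A → T (g, x) ∈ A) ∧ (x ∉ A → T (g, x) ∉ A)) →
      μ A = 0 ∨ μ Aᶜ = 0 := by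
    intro A hA hae
    -- f₀ belongs to the a.e. set since ν {f₀} > 0
    have hP : ∀ᵐ x ∂μ, (x ∈ A → T (f₀, x) ∈ A) ∧ (x ∉ A → T (f₀, x) ∉ A) := by
      by_contra hcon
      have hsub : ({f₀} : Set G) ⊆
          {g | ¬ ∀ᵐ x ∂μ, (x ∈ A → T (g, x) ∈ A) ∧ (x ∉ A → T (g, x) ∉ A)} := by
        intro g hg
        simp only [Set.mem_singleton_iff] at hg
        subst hg
        exact hcon
      have h0 := ae_iff.mp hae
      exact hf₀.ne' (le_antisymm ((measure_mono hsub).trans h0.le) zero_le)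
    have hinv : (fun x => T (f₀, x)) ⁻¹' A =ᵐ[μ] A := by
      filter_upwards [hP] with x hx
      simp only [Set.mem_preimage, eq_iff_iff]
      constructor
      · intro h
        by_contra hxA
        exact hx.2 hxA h
      · exact hx.1
    rcases herg.quasiErgodic.ae_empty_or_univ₀ hA.nullMeasurableSet hinv with h | h
    · left; exact ae_eq_empty.mp h
    · right; exact ae_eq_univ.mp h
  refine ⟨?_, part2⟩
  intro μ₁ μ₂ h₁ h₂ hs₁ hs₂ hsing heq
  haveI := h₁; haveI := h₂
  obtain ⟨S, hS, hμ₁S, hμ₂Sc⟩ := hsing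
  -- a.e. g, μ₁ (T_g⁻¹ S) = 0
  have hm₁ : Measurable fun g => μ₁ {x | T (g, x) ∈ S} := by
    have := measurable_measure_prodMk_left (ν := μ₁) (hT hS)
    exact this
  have hm₂ : Measurable fun g => μ₂ {x | T (g, x) ∈ Sᶜ} := by
    have := measurable_measure_prodMk_left (ν := μ₂) (hT hS.compl)
    exact this
  have hae₁ : ∀ᵐ g ∂ν, μ₁ {x | T (g, x) ∈ S} = 0 := by
    have h0 : ∫⁻ g, μ₁ {x | T (g, x) ∈ S} ∂ν = 0 := by rw [← hs₁ S hS]; exact hμ₁S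
    have := (lintegral_eq_zero_iff hm₁).mp h0
    filter_upwards [this] with g hg using hg
  have hae₂ : ∀ᵐ g ∂ν, μ₂ {x | T (g, x) ∈ Sᶜ} = 0 := by
    have h0 : ∫⁻ g, μ₂ {x | T (g, x) ∈ Sᶜ} ∂ν = 0 := by rw [← hs₂ Sᶜ hS.compl]; exact hμ₂Sc
    have := (lintegral_eq_zero_iff hm₂).mp h0
    filter_upwards [this] with g hg using hg
  have hkey : μ S = 0 ∨ μ Sᶜ = 0 := by
    apply part2 S hS
    filter_upwards [hae₁, hae₂] with g hg₁ hg₂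
    rw [heq]
    have hbad₁ : μ₁ {x | ¬ ((x ∈ S → T (g, x) ∈ S) ∧ (x ∉ S → T (g, x) ∉ S))} = 0 := by
      refine measure_mono_null ?_ (measure_union_null hμ₁S hg₁)
      intro x hx
      simp only [Set.mem_setOf_eq, not_and_or, Classical.not_imp, not_not] at hx
      rcases hx with ⟨h, _⟩ | ⟨_, h⟩
      · exact Or.inl h
      · exact Or.inr h
    have hbad₂ : μ₂ {x | ¬ ((x ∈ S → T (g, x) ∈ S) ∧ (x ∉ S → T (g, x) ∉ S))} = 0 := by
      refine measure_mono_null ?_ (measure_union_null hμ₂Sc hg₂)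
      intro x hx
      simp only [Set.mem_setOf_eq, not_and_or, Classical.not_imp, not_not] at hx
      rcases hx with ⟨_, h⟩ | ⟨h, _⟩
      · exact Or.inr h
      · exact Or.inl h
    have : (μ₁ + μ₂) {x | ¬ ((x ∈ S → T (g, x) ∈ S) ∧ (x ∉ S → T (g, x) ∉ S))} = 0 := by
      rw [Measure.add_apply, hbad₁, hbad₂, add_zero]
    exact this
  rcases hkey with h | h
  · right
    apply Measure.measure_univ_eq_zero.mp
    have hμ₂S : μ₂ S = 0 := by
      refine le_antisymm (le_trans ?_ h.le) zero_le
      rw [heq, Measure.add_apply]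
      exact le_add_self
    refine le_antisymm ?_ zero_le
    calc μ₂ Set.univ ≤ μ₂ S + μ₂ Sᶜ := by
          rw [← Set.union_compl_self S]; exact measure_union_le _ _
      _ = 0 := by rw [hμ₂S, hμ₂Sc, add_zero]
  · left
    apply Measure.measure_univ_eq_zero.mp
    have hμ₁Sc : μ₁ Sᶜ = 0 := by
      refine le_antisymm (le_trans ?_ h.le) zero_le
      rw [heq, Measure.add_apply]
      exact le_self_add
    refine le_antisymm ?_ zero_le
    calc μ₁ Set.univ ≤ μ₁ S + μ₁ Sᶜ := by
          rw [← Set.union_compl_self S]; exact measure_union_le _ _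
      _ = 0 := by rw [hμ₁S, hμ₁Sc, add_zero]
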